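/- If X : [0,T] → ℝ is a finite quadratic variation function and Y : [0,T] → ℝ is continuous with zero quadratic variation (i.e. [Y,Y]_t = 0 for all t), then the covariation [X,Y] exists and equals zero. -/

import Mathlib

open MeasureTheory Filter Set

/-- `f` is extended constantly outside `[0,T]`. -/
def ExtConst (T : ℝ) (f : ℝ → ℝ) : Prop :=
  (∀ t ≤ (0:ℝ), f t = f 0) ∧ ∀ t, T ≤ t → f t = f T

/-- The `ε`-covariation `C(ε,X,Y)(t)`. -/
noncomputable def Ccov (ε : ℝ) (X Y : ℝ → ℝ) (t : ℝ) : ℝ :=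
  ∫ s in (0:ℝ)..t, (X (s + ε) - X s) * (Y (s + ε) - Y s) / ε

lemma ccov_cont (ε : ℝ) {X Y : ℝ → ℝ} (hX : Continuous X) (hY : Continuous Y) :
    Continuous (Ccov ε X Y) := by
  have hf : Continuous fun s => (X (s + ε) - X s) * (Y (s + ε) - Y s) / ε := by fun_prop
  exact intervalIntegral.continuous_primitive (fun a b => hf.intervalIntegrable a b) 0

lemma ccov_nonneg {ε : ℝ} (hε : 0 < ε) (X : ℝ → ℝ) {t : ℝ} (ht : 0 ≤ t) :
    0 ≤ Ccov ε X X t := by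
  apply intervalIntegral.integral_nonneg ht
  intro s _
  exact div_nonneg (mul_self_nonneg _) hε.le

lemma amgm {δ : ℝ} (hδ : 0 < δ) (a b : ℝ) :
    |a * b| ≤ δ/2 * (a * a) + 1/(2*δ) * (b * b) := by
  have h2 : 2*δ*|a*b| ≤ (δ*a)^2 + b^2 := by
    rcases abs_cases (a*b) with ⟨h, _⟩ | ⟨h, _⟩ <;> rw [h] <;>
      nlinarith [sq_nonneg (δ*a - b), sq_nonneg (δ*a + b)]
  rw [show δ/2 * (a*a) + 1/(2*δ) * (b*b) = ((δ*a)^2 + b^2)/(2*δ) by field_simp,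
    le_div_iff₀ (by positivity)]
  linarith

lemma ccov_key {ε δ : ℝ} (hε : 0 < ε) (hδ : 0 < δ) {X Y : ℝ → ℝ}
    (hX : Continuous X) (hY : Continuous Y) {t : ℝ} (ht : 0 ≤ t) :
    |Ccov ε X Y t| ≤ δ/2 * Ccov ε X X t + 1/(2*δ) * Ccov ε Y Y t := by
  have hfXY : Continuous fun s => (X (s + ε) - X s) * (Y (s + ε) - Y s) / ε := by fun_prop
  have hfXX : Continuous fun s => (X (s + ε) - X s) * (X (s + ε) - X s) / ε := by fun_prop
  have hfYY : Continuous fun s => (Y (s + ε) - Y s) * (Y (s + ε) - Y s) / ε := by fun_prop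
  have habs : |Ccov ε X Y t| ≤ ∫ s in (0:ℝ)..t,
      |((X (s + ε) - X s) * (Y (s + ε) - Y s) / ε)| :=
    intervalIntegral.abs_integral_le_integral_abs ht
  have hmono : (∫ s in (0:ℝ)..t, |((X (s + ε) - X s) * (Y (s + ε) - Y s) / ε)|)
      ≤ ∫ s in (0:ℝ)..t, (δ/2 * ((X (s + ε) - X s) * (X (s + ε) - X s) / ε)
        + 1/(2*δ) * ((Y (s + ε) - Y s) * (Y (s + ε) - Y s) / ε)) := by
    apply intervalIntegral.integral_mono_on ht
    · exact (hfXY.abs).intervalIntegrable 0 t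
    · exact ((continuous_const.mul hfXX).add (continuous_const.mul hfYY)).intervalIntegrable 0 t
    · intro s _
      set a := X (s + ε) - X s
      set b := Y (s + ε) - Y s
      have h := amgm hδ a b
      rw [abs_div, abs_of_pos hε,
        show δ/2 * (a*a/ε) + 1/(2*δ) * (b*b/ε)
          = (δ/2 * (a*a) + 1/(2*δ) * (b*b))/ε by ring]
      gcongr
  have hsplit : (∫ s in (0:ℝ)..t, (δ/2 * ((X (s + ε) - X s) * (X (s + ε) - X s) / ε)
        + 1/(2*δ) * ((Y (s + ε) - Y s) * (Y (s + ε) - Y s) / ε)))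
      = δ/2 * Ccov ε X X t + 1/(2*δ) * Ccov ε Y Y t := by
    rw [intervalIntegral.integral_add (f := fun s => δ/2 * ((X (s + ε) - X s) * (X (s + ε) - X s) / ε))
      (g := fun s => 1/(2*δ) * ((Y (s + ε) - Y s) * (Y (s + ε) - Y s) / ε))
      ((continuous_const.mul hfXX).intervalIntegrable 0 t)
      ((continuous_const.mul hfYY).intervalIntegrable 0 t),
      intervalIntegral.integral_const_mul, intervalIntegral.integral_const_mul]
    rfl
  linarith

theorem stmt6' (T : ℝ) (hT : 0 < T) (X Y : ℝ → ℝ)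
    (hX : Continuous X) (hY : Continuous Y)
    (QX : ℝ → ℝ)
    (hQX : TendstoUniformlyOn (fun ε t => Ccov ε X X t) QX
      (nhdsWithin 0 (Set.Ioi 0)) (Set.Icc 0 T))
    (hQY : TendstoUniformlyOn (fun ε t => Ccov ε Y Y t) 0
      (nhdsWithin 0 (Set.Ioi 0)) (Set.Icc 0 T)) :
    TendstoUniformlyOn (fun ε t => Ccov ε X Y t) 0
      (nhdsWithin 0 (Set.Ioi 0)) (Set.Icc 0 T) := by
  have hpos : ∀ᶠ ε in nhdsWithin (0:ℝ) (Set.Ioi 0), ε ∈ Set.Ioi (0:ℝ) :=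
    eventually_mem_nhdsWithin
  rw [Metric.tendstoUniformlyOn_iff] at hQX hQY ⊢
  obtain ⟨ε₁, hε₁b, hε₁pos⟩ := ((hQX 1 one_pos).and hpos).exists
  obtain ⟨B, hB⟩ := (isCompact_Icc : IsCompact (Set.Icc 0 T)).exists_bound_of_continuousOn
    ((ccov_cont ε₁ hX hX).continuousOn)
  have hBnn : (0:ℝ) ≤ B :=
    le_trans (norm_nonneg _) (hB 0 (Set.mem_Icc.mpr ⟨le_refl 0, hT.le⟩))
  have hMb : ∀ᶠ ε in nhdsWithin (0:ℝ) (Set.Ioi 0),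
      ∀ t ∈ Set.Icc 0 T, Ccov ε X X t ≤ B + 2 := by
    filter_upwards [hQX 1 one_pos] with ε hε t ht
    have h1 := hε t ht
    have h2 := hε₁b t ht
    have h3 := hB t ht
    rw [Real.dist_eq] at h1 h2
    rw [Real.norm_eq_abs] at h3
    have a1 := abs_le.mp (le_of_lt h1)
    have a2 := abs_le.mp (le_of_lt h2)
    have a3 := abs_le.mp h3
    linarith [a1.1, a2.2, a3.2]
  have hK : (0:ℝ) < B + 3 := by linarith
  intro η hη
  set δ : ℝ := η / (2 * (B + 3)) with hδdef
  have hδ : 0 < δ := div_pos hη (by linarith)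
  have e1 : δ/2 * (B + 3) = η/4 := by
    rw [hδdef]; field_simp; ring
  have e2 : 1/(2*δ) * (δ * η) = η/2 := by
    field_simp
  filter_upwards [hMb, hQY (δ * η) (mul_pos hδ hη), hpos] with ε hXXb hYYb hεpos t ht
  have h0t : (0:ℝ) ≤ t := ht.1
  have hkey := ccov_key hεpos hδ hX hY h0t
  have hXXt := hXXb t ht
  have hYYt := hYYb t ht
  rw [Real.dist_eq] at hYYt ⊢
  simp only [Pi.zero_apply, zero_sub, abs_neg] at hYYt ⊢
  have hYYnn : 0 ≤ Ccov ε Y Y t := ccov_nonneg hεpos Y h0t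
  have hXXnn : 0 ≤ Ccov ε X X t := ccov_nonneg hεpos X h0t
  rw [abs_of_nonneg hYYnn] at hYYt
  have step1 : δ/2 * Ccov ε X X t ≤ η/4 := by
    calc δ/2 * Ccov ε X X t ≤ δ/2 * (B + 3) :=
          mul_le_mul_of_nonneg_left (by linarith) (by positivity)
      _ = η/4 := e1
  have step2 : 1/(2*δ) * Ccov ε Y Y t < η/2 := by
    calc 1/(2*δ) * Ccov ε Y Y t < 1/(2*δ) * (δ * η) :=
          mul_lt_mul_of_pos_left hYYt (by positivity)
      _ = η/2 := e2
  linarith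

/-- if `X` has finite quadratic variation and `Y` has zero quadratic
variation, then the covariation `[X,Y]` exists and is zero. -/
theorem stmt6 (T : ℝ) (hT : 0 < T) (X Y : ℝ → ℝ)
    (hX : Continuous X) (hY : Continuous Y)
    (hXe : ExtConst T X) (hYe : ExtConst T Y)
    (QX : ℝ → ℝ)
    (hQX : TendstoUniformlyOn (fun ε t => Ccov ε X X t) QX
      (nhdsWithin 0 (Set.Ioi 0)) (Set.Icc 0 T))
    (hQY : TendstoUniformlyOn (fun ε t => Ccov ε Y Y t) 0
      (nhdsWithin 0 (Set.Ioi 0)) (Set.Icc 0 T)) :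
    TendstoUniformlyOn (fun ε t => Ccov ε X Y t) 0
      (nhdsWithin 0 (Set.Ioi 0)) (Set.Icc 0 T) := by
  exact stmt6' T hT X Y hX hY QX hQX hQY
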